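/- Let D = (E, 𝓕) be a delta-matroid with ∅ ∈ 𝓕 (a normal delta-matroid), and let e1, e2 ∈ E be distinct elements such that {e1, e2} ∈ 𝓕 and such that every feasible set F ∈ 𝓕 with e2 ∉ F also satisfies e1 ∉ F (equivalently, D∖e2 = ({e1}, {∅}) ⊕ D∖{e1,e2}). Then T_D(z) = T_{D∖e1}(z) + 2z² · T_{D∖{e1,e2}}(z) in ℤ[z], where D∖e1 = (E∖{e1}, {F ∈ 𝓕 : e1 ∉ F}) and D∖{e1,e2} = (E∖{e1,e2}, {F ∈ 𝓕 : e1 ∉ F and e2 ∉ F}). -/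

import Mathlib

open Polynomial

/-- The width of a set system on a finite ground set, given by the predicate `P` describing
its feasible sets: the maximum cardinality of a feasible set minus the minimum cardinality. -/
noncomputable def sysWidth {E : Type*} (P : Finset E → Prop) : ℕ :=
  sSup {k | ∃ S, P S ∧ S.card = k} - sInf {k | ∃ S, P S ∧ S.card = k}

/-- The twist polynomial of the set system with ground set `ground` and feasible sets
described by the predicate `P`: `T_D(z) = Σ_{A ⊆ ground} z^{w(D*A)}`, where a set `S` is
feasible in the twist `D*A` iff `S ∆ A` is feasible in `D`. -/
noncomputable def sysTwistPoly {E : Type*} [DecidableEq E] (ground : Finset E)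
    (P : Finset E → Prop) : Polynomial ℤ :=
  ∑ A ∈ ground.powerset, (X : Polynomial ℤ) ^ sysWidth fun S => P (symmDiff S A)

section TwistLeafAux

open Finset

variable {E : Type*} [DecidableEq E]

lemma tl_sd_insert_left {e : E} {s t : Finset E} (hs : e ∉ s) (ht : e ∉ t) :
    symmDiff (insert e s) t = insert e (symmDiff s t) := by
  ext a
  by_cases h : a = e
  · subst h; simp [Finset.mem_symmDiff, hs, ht]
  · simp [Finset.mem_symmDiff, Finset.mem_insert, h]

lemma tl_sd_insert_right {e : E} {s t : Finset E} (hs : e ∉ s) (ht : e ∉ t) :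
    symmDiff s (insert e t) = insert e (symmDiff s t) := by
  rw [symmDiff_comm, tl_sd_insert_left ht hs, symmDiff_comm]

lemma tl_sd_insert_both {e : E} {s t : Finset E} (hs : e ∉ s) (ht : e ∉ t) :
    symmDiff (insert e s) (insert e t) = symmDiff s t := by
  ext a
  by_cases h : a = e
  · subst h; simp [Finset.mem_symmDiff, hs, ht]
  · simp [Finset.mem_symmDiff, Finset.mem_insert, h]

lemma tl_not_mem_sd {e : E} {s t : Finset E} (hs : e ∉ s) (ht : e ∉ t) :
    e ∉ symmDiff s t := by simp [Finset.mem_symmDiff, hs, ht]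

lemma tl_card_sd_insert_left {e : E} {s t : Finset E} (hs : e ∉ s) (ht : e ∉ t) :
    (symmDiff (insert e s) t).card = (symmDiff s t).card + 1 := by
  rw [tl_sd_insert_left hs ht, Finset.card_insert_of_notMem (tl_not_mem_sd hs ht)]

lemma tl_card_sd_insert_right {e : E} {s t : Finset E} (hs : e ∉ s) (ht : e ∉ t) :
    (symmDiff s (insert e t)).card = (symmDiff s t).card + 1 := by
  rw [tl_sd_insert_right hs ht, Finset.card_insert_of_notMem (tl_not_mem_sd hs ht)]

lemma tl_card_sd_triangle (s u t : Finset E) :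
    (symmDiff s t).card ≤ (symmDiff s u).card + (symmDiff u t).card :=
  le_trans (Finset.card_le_card (symmDiff_triangle s u t)) (Finset.card_union_le _ _)

lemma tl_sd_erase_self {v : E} {s : Finset E} (hv : v ∈ s) :
    symmDiff (s.erase v) s = {v} := by
  ext a
  by_cases h : a = v
  · subst h; simp [Finset.mem_symmDiff, hv]
  · simp [Finset.mem_symmDiff, h]

lemma tl_sd_empty (s : Finset E) : symmDiff s ∅ = s := by
  ext a; simp [Finset.mem_symmDiff]

lemma tl_sd_singleton_of_mem {v : E} {s : Finset E} (h : v ∈ s) :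
    symmDiff s {v} = s.erase v := by
  ext a
  by_cases hav : a = v
  · subst hav; simp [Finset.mem_symmDiff, h]
  · simp [Finset.mem_symmDiff, hav]

lemma tl_sd_singleton_of_not_mem {v : E} {s : Finset E} (h : v ∉ s) :
    symmDiff s {v} = insert v s := by
  have h0 : ({v} : Finset E) = insert v ∅ := rfl
  rw [h0, tl_sd_insert_right h (Finset.notMem_empty v), tl_sd_empty]

lemma tl_sd_pair_of_mem {v e : E} {s : Finset E} (hv : v ∈ s) (he : e ∉ s) (hvne : v ≠ e) :
    symmDiff s {e, v} = insert e (s.erase v) := by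
  have h0 : ({e, v} : Finset E) = insert e {v} := rfl
  rw [h0, tl_sd_insert_right he (by simp [Ne.symm hvne]), tl_sd_singleton_of_mem hv]

lemma tl_sd_insert_right_mem {e : E} {s t : Finset E} (hs : e ∈ s) (ht : e ∉ t) :
    symmDiff s (insert e t) = (symmDiff s t).erase e := by
  ext a
  by_cases h : a = e
  · subst h; simp [Finset.mem_symmDiff, hs, ht]
  · simp [Finset.mem_symmDiff, Finset.mem_insert, h]

/-- The full table of symmetric-difference cardinalities used in the main proof. -/
lemma tl_card_table {e1 e2 : E} (hne : e1 ≠ e2) {G A : Finset E}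
    (h1 : e1 ∉ G) (h2 : e2 ∉ G) (hA1 : e1 ∉ A) (hA2 : e2 ∉ A) :
    (symmDiff (insert e2 G) A).card = (symmDiff G A).card + 1 ∧
    (symmDiff (insert e1 (insert e2 G)) A).card = (symmDiff G A).card + 2 ∧
    (symmDiff G (insert e1 A)).card = (symmDiff G A).card + 1 ∧
    (symmDiff (insert e2 G) (insert e1 A)).card = (symmDiff G A).card + 2 ∧
    (symmDiff (insert e1 (insert e2 G)) (insert e1 A)).card = (symmDiff G A).card + 1 ∧
    (symmDiff G (insert e2 A)).card = (symmDiff G A).card + 1 ∧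
    (symmDiff (insert e2 G) (insert e2 A)).card = (symmDiff G A).card ∧
    (symmDiff (insert e1 (insert e2 G)) (insert e2 A)).card = (symmDiff G A).card + 1 ∧
    (symmDiff G (insert e1 (insert e2 A))).card = (symmDiff G A).card + 2 ∧
    (symmDiff (insert e2 G) (insert e1 (insert e2 A))).card = (symmDiff G A).card + 1 ∧
    (symmDiff (insert e1 (insert e2 G)) (insert e1 (insert e2 A))).card
      = (symmDiff G A).card := by
  have h12G : e1 ∉ insert e2 G := by simp [Finset.mem_insert, hne, h1]
  have h12A : e1 ∉ insert e2 A := by simp [Finset.mem_insert, hne, hA1]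
  have h21G : e2 ∉ insert e1 G := by simp [Finset.mem_insert, Ne.symm hne, h2]
  refine ⟨tl_card_sd_insert_left h2 hA2, ?_, tl_card_sd_insert_right h1 hA1, ?_, ?_, 
    tl_card_sd_insert_right h2 hA2, ?_, ?_, ?_, ?_, ?_⟩
  · rw [tl_card_sd_insert_left h12G hA1, tl_card_sd_insert_left h2 hA2]
  · rw [tl_card_sd_insert_right h12G hA1, tl_card_sd_insert_left h2 hA2]
  · rw [tl_sd_insert_both h12G hA1, tl_card_sd_insert_left h2 hA2]
  · rw [tl_sd_insert_both h2 hA2]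
  · rw [Finset.insert_comm, tl_sd_insert_both h21G hA2, tl_card_sd_insert_left h1 hA1]
  · rw [tl_card_sd_insert_right h1 h12A, tl_card_sd_insert_right h2 hA2]
  · rw [tl_card_sd_insert_right h12G h12A, tl_sd_insert_both h2 hA2]
  · rw [tl_sd_insert_both h12G h12A, tl_sd_insert_both h2 hA2]

variable [Fintype E]

def tlVset (P : Finset E → Prop) (A : Finset E) : Set ℕ :=
  {k | ∃ F, P F ∧ (symmDiff F A).card = k}

omit [Fintype E] in
lemma tl_sysWidth_twist (P : Finset E → Prop) (A : Finset E) :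
    sysWidth (fun S => P (symmDiff S A)) = sSup (tlVset P A) - sInf (tlVset P A) := by
  have h : {k | ∃ S, P (symmDiff S A) ∧ S.card = k} = tlVset P A := by
    ext k
    constructor
    · rintro ⟨S, hS, rfl⟩
      exact ⟨symmDiff S A, hS, by rw [symmDiff_symmDiff_cancel_right]⟩
    · rintro ⟨F, hF, rfl⟩
      exact ⟨symmDiff F A, by rwa [symmDiff_symmDiff_cancel_right], rfl⟩
  rw [sysWidth, h]

lemma tl_Vset_bdd (P : Finset E → Prop) (A : Finset E) : BddAbove (tlVset P A) := by
  refine ⟨Fintype.card E, ?_⟩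
  rintro k ⟨F, _, rfl⟩
  exact Finset.card_le_univ _

omit [Fintype E] in
lemma tl_width_shift {s t : Set ℕ} (hne : s.Nonempty) (hbdd : BddAbove s)
    (h : t = (· + 1) '' s) : sSup t - sInf t = sSup s - sInf s := by
  subst h
  have h1 : sSup ((· + 1) '' s) = sSup s + 1 := by
    apply le_antisymm
    · apply csSup_le (hne.image _)
      rintro x ⟨y, hy, rfl⟩
      exact Nat.add_le_add_right (le_csSup hbdd hy) 1
    · apply le_csSup
      · obtain ⟨n, hn⟩ := hbdd
        exact ⟨n + 1, by rintro x ⟨y, hy, rfl⟩; exact Nat.add_le_add_right (hn hy) 1⟩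
      · exact ⟨sSup s, Nat.sSup_mem hne hbdd, rfl⟩
  have h2 : sInf ((· + 1) '' s) = sInf s + 1 := by
    apply le_antisymm
    · exact Nat.sInf_le ⟨sInf s, Nat.sInf_mem hne, rfl⟩
    · apply le_csInf (hne.image _)
      rintro x ⟨y, hy, rfl⟩
      exact Nat.add_le_add_right (Nat.sInf_le hy) 1
  rw [h1, h2, Nat.succ_sub_succ]

end TwistLeafAux

section TwistLeafStruct

open Finset

variable {E : Type*} [DecidableEq E]
variable (𝓕 : Finset (Finset E))
variable (hexchange : ∀ A ∈ 𝓕, ∀ B ∈ 𝓕, ∀ u ∈ symmDiff A B,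
      ∃ v ∈ symmDiff A B, symmDiff A {u, v} ∈ 𝓕)
variable (e1 e2 : E) (hne : e1 ≠ e2) (hfeas : ({e1, e2} : Finset E) ∈ 𝓕)
variable (hleaf : ∀ F ∈ 𝓕, e2 ∉ F → e1 ∉ F)

include hexchange hne hfeas hleaf in
/-- Type-00 feasible sets lift to type-11 feasible sets. -/
lemma tl_up {F : Finset E} (hF : F ∈ 𝓕) (h1 : e1 ∉ F) (h2 : e2 ∉ F) :
    insert e1 (insert e2 F) ∈ 𝓕 := by
  have hu : e1 ∈ symmDiff F {e1, e2} := by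
    simp [Finset.mem_symmDiff, h1]
  obtain ⟨v, hv, hvF⟩ := hexchange F hF _ hfeas e1 hu
  by_cases hve2 : v = e2
  · rw [hve2] at hvF
    have heq : symmDiff F {e1, e2} = insert e1 (insert e2 F) := by
      have h0 : ({e1, e2} : Finset E) = insert e1 {e2} := rfl
      rw [h0, tl_sd_insert_right h1 (by simp [hne]), tl_sd_singleton_of_not_mem h2]
    rwa [heq] at hvF
  · exfalso
    by_cases hve1 : v = e1
    · rw [hve1] at hvF
      have h0 : ({e1, e1} : Finset E) = {e1} := by simp
      rw [h0, tl_sd_singleton_of_not_mem h1] at hvF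
      exact hleaf _ hvF (by simp [h2, Ne.symm hne]) (Finset.mem_insert_self _ _)
    · have hvmem : v ∈ F := by
        rw [Finset.mem_symmDiff] at hv
        rcases hv with ⟨h, _⟩ | ⟨h, _⟩
        · exact h
        · simp only [Finset.mem_insert, Finset.mem_singleton] at h
          rcases h with h | h
          · exact absurd h hve1
          · exact absurd h hve2
      rw [tl_sd_pair_of_mem hvmem h1 hve1] at hvF
      exact hleaf _ hvF
        (by simp [Finset.mem_insert, Ne.symm hne, Finset.mem_erase, h2])
        (Finset.mem_insert_self _ _)

include hexchange hne hleaf in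
/-- Type-11 feasible sets drop to type-00 feasible sets. -/
lemma tl_down (hnormal : ∅ ∈ 𝓕) {F : Finset E} (hF : F ∈ 𝓕) (h1 : e1 ∈ F) (h2 : e2 ∈ F) :
    (F.erase e1).erase e2 ∈ 𝓕 := by
  have hu : e2 ∈ symmDiff F ∅ := by simp [Finset.mem_symmDiff, h2]
  obtain ⟨v, hv, hvF⟩ := hexchange F hF ∅ hnormal e2 hu
  rw [tl_sd_empty] at hv
  by_cases hve1 : v = e1
  · rw [hve1] at hvF
    have h0 : ({e2, e1} : Finset E) = insert e2 {e1} := rfl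
    rw [h0, tl_sd_insert_right_mem h2 (by simp [hne.symm]), tl_sd_singleton_of_mem h1] at hvF
    exact hvF
  · exfalso
    by_cases hve2 : v = e2
    · rw [hve2] at hvF
      have h0 : ({e2, e2} : Finset E) = {e2} := by simp
      rw [h0, tl_sd_singleton_of_mem h2] at hvF
      exact hleaf _ hvF (Finset.notMem_erase _ _) (Finset.mem_erase.mpr ⟨hne, h1⟩)
    · have h0 : ({e2, v} : Finset E) = insert e2 {v} := rfl
      rw [h0, tl_sd_insert_right_mem h2 (by simp [Ne.symm hve2]),
        tl_sd_singleton_of_mem hv] at hvF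
      exact hleaf _ hvF (Finset.notMem_erase _ _)
        (Finset.mem_erase.mpr ⟨hne, Finset.mem_erase.mpr ⟨Ne.symm hve1, h1⟩⟩)

include hexchange hne hfeas hleaf in
/-- Each type-01 feasible set is within symmetric difference 1 (after deleting `e2`)
of a type-00 feasible set. -/
lemma tl_mid (hnormal : ∅ ∈ 𝓕) {F : Finset E} (hF : F ∈ 𝓕) (h1 : e1 ∉ F) (h2 : e2 ∈ F) :
    ∃ G ∈ 𝓕, e1 ∉ G ∧ e2 ∉ G ∧ (symmDiff G (F.erase e2)).card ≤ 1 := by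
  have hu : e1 ∈ symmDiff F {e1, e2} := by simp [Finset.mem_symmDiff, h1]
  obtain ⟨v, hv, hvF⟩ := hexchange F hF _ hfeas e1 hu
  by_cases hve1 : v = e1
  · rw [hve1] at hvF
    have h0 : ({e1, e1} : Finset E) = {e1} := by simp
    rw [h0, tl_sd_singleton_of_not_mem h1] at hvF
    have hd := tl_down 𝓕 hexchange e1 e2 hne hleaf hnormal hvF
      (Finset.mem_insert_self _ _) (Finset.mem_insert_of_mem h2)
    rw [Finset.erase_insert h1] at hd
    exact ⟨F.erase e2, hd, fun h => h1 (Finset.mem_of_mem_erase h), Finset.notMem_erase _ _,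
      by rw [symmDiff_self]; simp⟩
  · have hvmem : v ∈ F := by
      rw [Finset.mem_symmDiff] at hv
      rcases hv with ⟨h, _⟩ | ⟨h, hnF⟩
      · exact h
      · simp only [Finset.mem_insert, Finset.mem_singleton] at h
        rcases h with h | h
        · exact absurd h hve1
        · exact absurd (h ▸ h2) hnF
    have hve2 : v ≠ e2 := by
      rw [Finset.mem_symmDiff] at hv
      rcases hv with ⟨_, h⟩ | ⟨_, h⟩
      · intro hc; exact h (by simp [hc])
      · exact absurd hvmem h
    rw [tl_sd_pair_of_mem hvmem h1 hve1] at hvF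
    have hd := tl_down 𝓕 hexchange e1 e2 hne hleaf hnormal hvF
      (Finset.mem_insert_self _ _)
      (Finset.mem_insert_of_mem (Finset.mem_erase.mpr ⟨Ne.symm hve2, h2⟩))
    rw [Finset.erase_insert (by simp [Finset.mem_erase, h1])] at hd
    refine ⟨(F.erase v).erase e2, hd,
      (by simp [Finset.mem_erase, h1]), Finset.notMem_erase _ _, ?_⟩
    rw [Finset.erase_right_comm, tl_sd_erase_self
      (Finset.mem_erase.mpr ⟨hve2, hvmem⟩)]
    simp

end TwistLeafStruct

section TwistLeafKey

open Finset

variable {E : Type*} [Fintype E] [DecidableEq E]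

/-- The key pointwise identity: for a fixed `A` avoiding `e1` and `e2`, the four twists of
`D` by `A`, `A∪{e2}`, `A∪{e1}`, `A∪{e1,e2}` contribute exactly the corresponding terms of
the recursion. -/
lemma tl_key (𝓕 : Finset (Finset E))
    (hexchange : ∀ A ∈ 𝓕, ∀ B ∈ 𝓕, ∀ u ∈ symmDiff A B,
      ∃ v ∈ symmDiff A B, symmDiff A {u, v} ∈ 𝓕)
    (hnormal : ∅ ∈ 𝓕)
    (e1 e2 : E) (hne : e1 ≠ e2) (hfeas : ({e1, e2} : Finset E) ∈ 𝓕)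
    (hleaf : ∀ F ∈ 𝓕, e2 ∉ F → e1 ∉ F)
    (A : Finset E) (hA1 : e1 ∉ A) (hA2 : e2 ∉ A) :
    (X : Polynomial ℤ) ^ sysWidth (fun S => symmDiff S A ∈ 𝓕)
      + X ^ sysWidth (fun S => symmDiff S (insert e2 A) ∈ 𝓕)
      + (X ^ sysWidth (fun S => symmDiff S (insert e1 A) ∈ 𝓕)
        + X ^ sysWidth (fun S => symmDiff S (insert e1 (insert e2 A)) ∈ 𝓕))
    = (X ^ sysWidth (fun S => symmDiff S A ∈ 𝓕 ∧ e1 ∉ symmDiff S A)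
        + X ^ sysWidth (fun S => symmDiff S (insert e2 A) ∈ 𝓕 ∧ e1 ∉ symmDiff S (insert e2 A)))
      + 2 * X ^ 2
        * X ^ sysWidth (fun S => symmDiff S A ∈ 𝓕 ∧ e1 ∉ symmDiff S A ∧ e2 ∉ symmDiff S A) := by
  have hV2ne : (tlVset (fun F => F ∈ 𝓕 ∧ e1 ∉ F ∧ e2 ∉ F) A).Nonempty :=
    ⟨_, ∅, ⟨hnormal, Finset.notMem_empty _, Finset.notMem_empty _⟩, rfl⟩
  have hbdd2 := tl_Vset_bdd (fun F => F ∈ 𝓕 ∧ e1 ∉ F ∧ e2 ∉ F) A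
  obtain ⟨b, hbdef⟩ : ∃ b, sSup (tlVset (fun F => F ∈ 𝓕 ∧ e1 ∉ F ∧ e2 ∉ F) A) = b := ⟨_, rfl⟩
  obtain ⟨a, hadef⟩ : ∃ a, sInf (tlVset (fun F => F ∈ 𝓕 ∧ e1 ∉ F ∧ e2 ∉ F) A) = a := ⟨_, rfl⟩
  have hbmem : b ∈ tlVset (fun F => F ∈ 𝓕 ∧ e1 ∉ F ∧ e2 ∉ F) A :=
    hbdef ▸ Nat.sSup_mem hV2ne hbdd2
  have hamem : a ∈ tlVset (fun F => F ∈ 𝓕 ∧ e1 ∉ F ∧ e2 ∉ F) A :=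
    hadef ▸ Nat.sInf_mem hV2ne
  have hab : a ≤ b := by rw [← hadef]; exact Nat.sInf_le hbmem
  have hle_b : ∀ {G : Finset E}, G ∈ 𝓕 → e1 ∉ G → e2 ∉ G → (symmDiff G A).card ≤ b := by
    intro G hG h1 h2
    rw [← hbdef]
    exact le_csSup hbdd2 ⟨_, ⟨hG, h1, h2⟩, rfl⟩
  have ha_le : ∀ {G : Finset E}, G ∈ 𝓕 → e1 ∉ G → e2 ∉ G → a ≤ (symmDiff G A).card := by
    intro G hG h1 h2
    rw [← hadef]
    exact Nat.sInf_le ⟨_, ⟨hG, h1, h2⟩, rfl⟩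
  have hcases : ∀ F ∈ 𝓕, (e1 ∉ F ∧ e2 ∉ F) ∨ (e1 ∉ F ∧ e2 ∈ F) ∨ (e1 ∈ F ∧ e2 ∈ F) := by
    intro F hF
    by_cases h1 : e1 ∈ F
    · by_cases h2 : e2 ∈ F
      · exact Or.inr (Or.inr ⟨h1, h2⟩)
      · exact absurd h1 (hleaf F hF h2)
    · by_cases h2 : e2 ∈ F
      · exact Or.inr (Or.inl ⟨h1, h2⟩)
      · exact Or.inl ⟨h1, h2⟩
  have hsplit : ∀ F : Finset E, e1 ∈ F → e2 ∈ F →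
      F = insert e1 (insert e2 ((F.erase e1).erase e2)) := by
    intro F h1 h2
    rw [Finset.insert_erase (Finset.mem_erase.mpr ⟨hne.symm, h2⟩), Finset.insert_erase h1]
  -- T1 : the sup and inf of the widths of the twist by `A` itself
  have hsupA : sSup (tlVset (fun F => F ∈ 𝓕) A) = b + 2 := by
    apply le_antisymm
    · refine csSup_le ⟨(symmDiff (∅ : Finset E) A).card, ∅, hnormal, rfl⟩ ?_
      rintro k ⟨F, hF, rfl⟩
      rcases hcases F hF with ⟨h1, h2⟩ | ⟨h1, h2⟩ | ⟨h1, h2⟩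
      · have := hle_b hF h1 h2; omega
      · obtain ⟨G, hG, hG1, hG2, hGd⟩ :=
          tl_mid 𝓕 hexchange e1 e2 hne hfeas hleaf hnormal hF h1 h2
        have hG01 : e1 ∉ F.erase e2 := fun h => h1 (Finset.mem_of_mem_erase h)
        have hG02 : e2 ∉ F.erase e2 := Finset.notMem_erase _ _
        obtain ⟨t1, -⟩ := tl_card_table hne hG01 hG02 hA1 hA2
        have hc : (symmDiff F A).card = (symmDiff (F.erase e2) A).card + 1 := by
          conv_lhs => rw [← Finset.insert_erase h2]
          exact t1
        have htri : (symmDiff (F.erase e2) A).card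
            ≤ (symmDiff (F.erase e2) G).card + (symmDiff G A).card :=
          tl_card_sd_triangle _ _ _
        have hsy : (symmDiff (F.erase e2) G).card = (symmDiff G (F.erase e2)).card := by
          rw [symmDiff_comm]
        have := hle_b hG hG1 hG2
        omega
      · have hG1 : e1 ∉ (F.erase e1).erase e2 := fun h =>
          (Finset.mem_erase.mp (Finset.mem_of_mem_erase h)).1 rfl
        have hG2 : e2 ∉ (F.erase e1).erase e2 := Finset.notMem_erase _ _
        have hGF : (F.erase e1).erase e2 ∈ 𝓕 :=
          tl_down 𝓕 hexchange e1 e2 hne hleaf hnormal hF h1 h2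
        obtain ⟨-, t2, -⟩ := tl_card_table hne hG1 hG2 hA1 hA2
        have hc : (symmDiff F A).card = (symmDiff ((F.erase e1).erase e2) A).card + 2 := by
          conv_lhs => rw [hsplit F h1 h2]
          exact t2
        have := hle_b hGF hG1 hG2
        omega
    · obtain ⟨F, ⟨hF, h1, h2⟩, hFc⟩ := hbmem
      apply le_csSup (tl_Vset_bdd _ _)
      refine ⟨insert e1 (insert e2 F),
        tl_up 𝓕 hexchange e1 e2 hne hfeas hleaf hF h1 h2, ?_⟩
      obtain ⟨-, t2, -⟩ := tl_card_table hne h1 h2 hA1 hA2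
      rw [t2, hFc]
  have hinfA : sInf (tlVset (fun F => F ∈ 𝓕) A) = a := by
    apply le_antisymm
    · obtain ⟨F, ⟨hF, h1, h2⟩, hFc⟩ := hamem
      exact Nat.sInf_le ⟨F, hF, hFc⟩
    · refine le_csInf ⟨(symmDiff (∅ : Finset E) A).card, ∅, hnormal, rfl⟩ ?_
      rintro k ⟨F, hF, rfl⟩
      rcases hcases F hF with ⟨h1, h2⟩ | ⟨h1, h2⟩ | ⟨h1, h2⟩
      · exact ha_le hF h1 h2
      · obtain ⟨G, hG, hG1, hG2, hGd⟩ :=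
          tl_mid 𝓕 hexchange e1 e2 hne hfeas hleaf hnormal hF h1 h2
        have hG01 : e1 ∉ F.erase e2 := fun h => h1 (Finset.mem_of_mem_erase h)
        have hG02 : e2 ∉ F.erase e2 := Finset.notMem_erase _ _
        obtain ⟨t1, -⟩ := tl_card_table hne hG01 hG02 hA1 hA2
        have hc : (symmDiff F A).card = (symmDiff (F.erase e2) A).card + 1 := by
          conv_lhs => rw [← Finset.insert_erase h2]
          exact t1
        have htri : (symmDiff G A).card
            ≤ (symmDiff G (F.erase e2)).card + (symmDiff (F.erase e2) A).card :=
          tl_card_sd_triangle _ _ _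
        have := ha_le hG hG1 hG2
        omega
      · have hG1 : e1 ∉ (F.erase e1).erase e2 := fun h =>
          (Finset.mem_erase.mp (Finset.mem_of_mem_erase h)).1 rfl
        have hG2 : e2 ∉ (F.erase e1).erase e2 := Finset.notMem_erase _ _
        have hGF : (F.erase e1).erase e2 ∈ 𝓕 :=
          tl_down 𝓕 hexchange e1 e2 hne hleaf hnormal hF h1 h2
        obtain ⟨-, t2, -⟩ := tl_card_table hne hG1 hG2 hA1 hA2
        have hc : (symmDiff F A).card = (symmDiff ((F.erase e1).erase e2) A).card + 2 := by
          conv_lhs => rw [hsplit F h1 h2]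
          exact t2
        have := ha_le hGF hG1 hG2
        omega
  -- T2 : the twist by `A ∪ {e1, e2}` has the same width set as the twist by `A`
  have hT2 : tlVset (fun F => F ∈ 𝓕) (insert e1 (insert e2 A)) = tlVset (fun F => F ∈ 𝓕) A := by
    ext k
    constructor
    · rintro ⟨F, hF, rfl⟩
      rcases hcases F hF with ⟨h1, h2⟩ | ⟨h1, h2⟩ | ⟨h1, h2⟩
      · obtain ⟨-, t2, -, -, -, -, -, -, t9, -⟩ := tl_card_table hne h1 h2 hA1 hA2
        exact ⟨insert e1 (insert e2 F),
          tl_up 𝓕 hexchange e1 e2 hne hfeas hleaf hF h1 h2, by rw [t2, t9]⟩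
      · have hG01 : e1 ∉ F.erase e2 := fun h => h1 (Finset.mem_of_mem_erase h)
        have hG02 : e2 ∉ F.erase e2 := Finset.notMem_erase _ _
        obtain ⟨t1, -, -, -, -, -, -, -, -, t10, -⟩ := tl_card_table hne hG01 hG02 hA1 hA2
        refine ⟨F, hF, ?_⟩
        have hc1 : (symmDiff F A).card = (symmDiff (F.erase e2) A).card + 1 := by
          conv_lhs => rw [← Finset.insert_erase h2]
          exact t1
        have hc2 : (symmDiff F (insert e1 (insert e2 A))).card
            = (symmDiff (F.erase e2) A).card + 1 := by
          conv_lhs => rw [← Finset.insert_erase h2]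
          exact t10
        omega
      · have hG1 : e1 ∉ (F.erase e1).erase e2 := fun h =>
          (Finset.mem_erase.mp (Finset.mem_of_mem_erase h)).1 rfl
        have hG2 : e2 ∉ (F.erase e1).erase e2 := Finset.notMem_erase _ _
        have hGF : (F.erase e1).erase e2 ∈ 𝓕 :=
          tl_down 𝓕 hexchange e1 e2 hne hleaf hnormal hF h1 h2
        obtain ⟨-, -, -, -, -, -, -, -, -, -, t11⟩ := tl_card_table hne hG1 hG2 hA1 hA2
        refine ⟨(F.erase e1).erase e2, hGF, ?_⟩
        have hc : (symmDiff F (insert e1 (insert e2 A))).card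
            = (symmDiff ((F.erase e1).erase e2) A).card := by
          conv_lhs => rw [hsplit F h1 h2]
          exact t11
        omega
    · rintro ⟨F, hF, rfl⟩
      rcases hcases F hF with ⟨h1, h2⟩ | ⟨h1, h2⟩ | ⟨h1, h2⟩
      · obtain ⟨-, t2, -, -, -, -, -, -, t9, -⟩ := tl_card_table hne h1 h2 hA1 hA2
        obtain ⟨-, -, -, -, -, -, -, -, -, -, t11⟩ := tl_card_table hne h1 h2 hA1 hA2
        refine ⟨insert e1 (insert e2 F),
          tl_up 𝓕 hexchange e1 e2 hne hfeas hleaf hF h1 h2, by rw [t11]⟩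
      · have hG01 : e1 ∉ F.erase e2 := fun h => h1 (Finset.mem_of_mem_erase h)
        have hG02 : e2 ∉ F.erase e2 := Finset.notMem_erase _ _
        obtain ⟨t1, -, -, -, -, -, -, -, -, t10, -⟩ := tl_card_table hne hG01 hG02 hA1 hA2
        refine ⟨F, hF, ?_⟩
        have hc1 : (symmDiff F A).card = (symmDiff (F.erase e2) A).card + 1 := by
          conv_lhs => rw [← Finset.insert_erase h2]
          exact t1
        have hc2 : (symmDiff F (insert e1 (insert e2 A))).card
            = (symmDiff (F.erase e2) A).card + 1 := by
          conv_lhs => rw [← Finset.insert_erase h2]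
          exact t10
        omega
      · have hG1 : e1 ∉ (F.erase e1).erase e2 := fun h =>
          (Finset.mem_erase.mp (Finset.mem_of_mem_erase h)).1 rfl
        have hG2 : e2 ∉ (F.erase e1).erase e2 := Finset.notMem_erase _ _
        have hGF : (F.erase e1).erase e2 ∈ 𝓕 :=
          tl_down 𝓕 hexchange e1 e2 hne hleaf hnormal hF h1 h2
        obtain ⟨-, t2, -, -, -, -, -, -, t9, -⟩ := tl_card_table hne hG1 hG2 hA1 hA2
        refine ⟨(F.erase e1).erase e2, hGF, ?_⟩
        have hc : (symmDiff F A).card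
            = (symmDiff ((F.erase e1).erase e2) A).card + 2 := by
          conv_lhs => rw [hsplit F h1 h2]
          exact t2
        omega
  -- T3 : deleting `e1` does not change the width set of the twist by `A ∪ {e1}`
  have hT3 : tlVset (fun F => F ∈ 𝓕) (insert e1 A)
      = tlVset (fun F => F ∈ 𝓕 ∧ e1 ∉ F) (insert e1 A) := by
    ext k
    constructor
    · rintro ⟨F, hF, rfl⟩
      by_cases h1 : e1 ∈ F
      · have h2 : e2 ∈ F := by
          by_contra h2; exact hleaf F hF h2 h1
        have hG1 : e1 ∉ (F.erase e1).erase e2 := fun h =>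
          (Finset.mem_erase.mp (Finset.mem_of_mem_erase h)).1 rfl
        have hG2 : e2 ∉ (F.erase e1).erase e2 := Finset.notMem_erase _ _
        have hGF : (F.erase e1).erase e2 ∈ 𝓕 :=
          tl_down 𝓕 hexchange e1 e2 hne hleaf hnormal hF h1 h2
        obtain ⟨-, -, t3, -, t5, -⟩ := tl_card_table hne hG1 hG2 hA1 hA2
        refine ⟨(F.erase e1).erase e2, ⟨hGF, hG1⟩, ?_⟩
        have hc : (symmDiff F (insert e1 A)).card
            = (symmDiff ((F.erase e1).erase e2) A).card + 1 := by
          conv_lhs => rw [hsplit F h1 h2]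
          exact t5
        omega
      · exact ⟨F, ⟨hF, h1⟩, rfl⟩
    · rintro ⟨F, ⟨hF, -⟩, rfl⟩
      exact ⟨F, hF, rfl⟩
  -- T4 : deleting `e1` does not change the width set of the twist by `A ∪ {e2}`
  have hT4 : tlVset (fun F => F ∈ 𝓕) (insert e2 A)
      = tlVset (fun F => F ∈ 𝓕 ∧ e1 ∉ F) (insert e2 A) := by
    ext k
    constructor
    · rintro ⟨F, hF, rfl⟩
      by_cases h1 : e1 ∈ F
      · have h2 : e2 ∈ F := by
          by_contra h2; exact hleaf F hF h2 h1
        have hG1 : e1 ∉ (F.erase e1).erase e2 := fun h =>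
          (Finset.mem_erase.mp (Finset.mem_of_mem_erase h)).1 rfl
        have hG2 : e2 ∉ (F.erase e1).erase e2 := Finset.notMem_erase _ _
        have hGF : (F.erase e1).erase e2 ∈ 𝓕 :=
          tl_down 𝓕 hexchange e1 e2 hne hleaf hnormal hF h1 h2
        obtain ⟨-, -, -, -, -, t6, -, t8, -⟩ := tl_card_table hne hG1 hG2 hA1 hA2
        refine ⟨(F.erase e1).erase e2, ⟨hGF, hG1⟩, ?_⟩
        have hc : (symmDiff F (insert e2 A)).card
            = (symmDiff ((F.erase e1).erase e2) A).card + 1 := by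
          conv_lhs => rw [hsplit F h1 h2]
          exact t8
        omega
      · exact ⟨F, ⟨hF, h1⟩, rfl⟩
    · rintro ⟨F, ⟨hF, -⟩, rfl⟩
      exact ⟨F, hF, rfl⟩
  -- shift : twisting `D∖e1` by `A ∪ {e1}` just shifts all cardinalities by one
  have hV1ne : (tlVset (fun F => F ∈ 𝓕 ∧ e1 ∉ F) A).Nonempty :=
    ⟨_, ∅, ⟨hnormal, Finset.notMem_empty _⟩, rfl⟩
  have hshift : tlVset (fun F => F ∈ 𝓕 ∧ e1 ∉ F) (insert e1 A)
      = (· + 1) '' tlVset (fun F => F ∈ 𝓕 ∧ e1 ∉ F) A := by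
    ext k
    constructor
    · rintro ⟨F, ⟨hF, h1⟩, rfl⟩
      exact ⟨(symmDiff F A).card, ⟨F, ⟨hF, h1⟩, rfl⟩,
        (tl_card_sd_insert_right h1 hA1).symm⟩
    · rintro ⟨k', ⟨F, ⟨hF, h1⟩, rfl⟩, rfl⟩
      exact ⟨F, ⟨hF, h1⟩, tl_card_sd_insert_right h1 hA1⟩
  -- assemble the widths
  have w0A : sysWidth (fun S => symmDiff S A ∈ 𝓕) = b + 2 - a := by
    rw [tl_sysWidth_twist (fun F => F ∈ 𝓕) A, hsupA, hinfA]
  have w0A12 : sysWidth (fun S => symmDiff S (insert e1 (insert e2 A)) ∈ 𝓕) = b + 2 - a := by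
    rw [tl_sysWidth_twist (fun F => F ∈ 𝓕) (insert e1 (insert e2 A)), hT2, hsupA, hinfA]
  have w0A1 : sysWidth (fun S => symmDiff S (insert e1 A) ∈ 𝓕)
      = sysWidth (fun S => symmDiff S A ∈ 𝓕 ∧ e1 ∉ symmDiff S A) := by
    rw [tl_sysWidth_twist (fun F => F ∈ 𝓕) (insert e1 A), hT3,
      tl_sysWidth_twist (fun F => F ∈ 𝓕 ∧ e1 ∉ F) A]
    exact tl_width_shift hV1ne (tl_Vset_bdd _ _) hshift
  have w0A2 : sysWidth (fun S => symmDiff S (insert e2 A) ∈ 𝓕)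
      = sysWidth (fun S => symmDiff S (insert e2 A) ∈ 𝓕 ∧ e1 ∉ symmDiff S (insert e2 A)) := by
    rw [tl_sysWidth_twist (fun F => F ∈ 𝓕) (insert e2 A), hT4,
      tl_sysWidth_twist (fun F => F ∈ 𝓕 ∧ e1 ∉ F) (insert e2 A)]
  have w2A : sysWidth (fun S => symmDiff S A ∈ 𝓕 ∧ e1 ∉ symmDiff S A ∧ e2 ∉ symmDiff S A)
      = b - a := by
    rw [tl_sysWidth_twist (fun F => F ∈ 𝓕 ∧ e1 ∉ F ∧ e2 ∉ F) A, hbdef, hadef]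
  rw [w0A, w0A12, w0A1, w0A2, w2A]
  have hba : b + 2 - a = (b - a) + 2 := by omega
  rw [hba, pow_add]
  ring

end TwistLeafKey

/-- Proposition 6.2 (leaf recursion for delta-matroids): let `D = (E, 𝓕)` be a normal
delta-matroid with distinct `e1, e2 ∈ E` such that `{e1, e2} ∈ 𝓕` and every feasible set
avoiding `e2` also avoids `e1` (equivalently, `D∖e2 = ({e1},{∅}) ⊕ D∖{e1,e2}`).  Then
`T_D(z) = T_{D∖e1}(z) + 2z²·T_{D∖{e1,e2}}(z)`. -/
theorem twistPoly_leaf_recursion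
    {E : Type*} [Fintype E] [DecidableEq E]
    (𝓕 : Finset (Finset E))
    (hexchange : ∀ A ∈ 𝓕, ∀ B ∈ 𝓕, ∀ u ∈ symmDiff A B,
      ∃ v ∈ symmDiff A B, symmDiff A {u, v} ∈ 𝓕)
    (hnormal : ∅ ∈ 𝓕)
    (e1 e2 : E) (hne : e1 ≠ e2) (hfeas : ({e1, e2} : Finset E) ∈ 𝓕)
    (hleaf : ∀ F ∈ 𝓕, e2 ∉ F → e1 ∉ F) :
    sysTwistPoly (Finset.univ : Finset E) (· ∈ 𝓕)
      = sysTwistPoly (Finset.univ.erase e1) (fun F => F ∈ 𝓕 ∧ e1 ∉ F)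
        + 2 * X ^ 2 * sysTwistPoly ((Finset.univ.erase e1).erase e2)
            (fun F => F ∈ 𝓕 ∧ e1 ∉ F ∧ e2 ∉ F) := by
  classical
  have he2m : e2 ∈ Finset.univ.erase e1 :=
    Finset.mem_erase.mpr ⟨hne.symm, Finset.mem_univ e2⟩
  obtain ⟨U, hUdef⟩ : ∃ U, (Finset.univ.erase e1).erase e2 = U := ⟨_, rfl⟩
  have he1U : e1 ∉ U := by
    rw [← hUdef]; simp
  have he2U : e2 ∉ U := by
    rw [← hUdef]; exact Finset.notMem_erase _ _
  have he1U2 : e1 ∉ insert e2 U := by simp [hne, he1U]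
  simp only [sysTwistPoly]
  rw [hUdef]
  have hU2 : Finset.univ.erase e1 = insert e2 U := by
    rw [← hUdef, Finset.insert_erase he2m]
  rw [hU2]
  have hU1 : (Finset.univ : Finset E) = insert e1 (insert e2 U) := by
    rw [← hU2, Finset.insert_erase (Finset.mem_univ e1)]
  rw [hU1]
  rw [Finset.sum_powerset_insert he1U2, Finset.sum_powerset_insert he2U,
    Finset.sum_powerset_insert he2U, Finset.sum_powerset_insert he2U, Finset.mul_sum]
  rw [← Finset.sum_add_distrib, ← Finset.sum_add_distrib, ← Finset.sum_add_distrib,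
    ← Finset.sum_add_distrib, ← Finset.sum_add_distrib]
  apply Finset.sum_congr rfl
  intro A hA
  have hA' := Finset.mem_powerset.mp hA
  have hA1 : e1 ∉ A := fun h => he1U (hA' h)
  have hA2 : e2 ∉ A := fun h => he2U (hA' h)
  exact tl_key 𝓕 hexchange hnormal e1 e2 hne hfeas hleaf A hA1 hA2
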